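/- Let A be a (not necessarily commutative) ring, J ⊆ A a two-sided ideal, N ≥ 0 a natural number, and I_1, …, I_N two-sided ideals of A such that (i) I_k · I_l ⊆ Σ_{m ≥ max(k,l)} I_m whenever k ≠ l, and (ii) I_k · I_k ⊆ I_k·J + Σ_{m > k} I_m for every k. Then every product of 2^N elements of the ideal I_1 + ⋯ + I_N lies in J. In particular there exists a positive integer M such that any product of M elements of I_1 + ⋯ + I_N lies in J. -/

import Mathlib

open TwoSidedIdeal

def TwoSidedIdeal.prod {A : Type*} [Ring A] (I J : TwoSidedIdeal A) : TwoSidedIdeal A :=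
  TwoSidedIdeal.span {x | ∃ a ∈ I, ∃ b ∈ J, x = a * b}

section aux
variable {A : Type*} [Ring A]

lemma prod_le_right (I J : TwoSidedIdeal A) : I.prod J ≤ J := by
  intro x hx
  exact mem_span_iff.mp hx J (by rintro y ⟨a, ha, b, hb, rfl⟩; exact J.mul_mem_left a b hb)

/-- pairing helper -/
lemma exists_pair_list (n : ℕ) : ∀ L : List A, L.length = 2 * n →
    ∃ P : List A, P.length = n ∧ P.prod = L.prod ∧
      ∀ p ∈ P, ∃ x ∈ L, ∃ y ∈ L, p = x * y := by
  induction n with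
  | zero => intro L hL; exact ⟨[], rfl, by simp_all [List.length_eq_zero_iff.mp hL], by simp⟩
  | succ n ih =>
      intro L hL
      match L with
      | x :: y :: L' =>
        obtain ⟨P, hlen, hprod, hmem⟩ := ih L' (by simpa [Nat.mul_succ] using hL; )
        refine ⟨(x * y) :: P, by simp [hlen], by simp [hprod, mul_assoc], ?_⟩
        rintro p hp
        rcases List.mem_cons.mp hp with rfl | hp
        · exact ⟨x, by simp, y, by simp, rfl⟩
        · obtain ⟨a, ha, b, hb, rfl⟩ := hmem p hp
          exact ⟨a, by simp [ha], b, by simp [hb], rfl⟩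

lemma split_list (J S : TwoSidedIdeal A) :
    ∀ L : List A, (∀ a ∈ L, ∃ u ∈ J, ∃ v ∈ S, a = u + v) →
      ∃ V : List A, V.length = L.length ∧ (∀ v ∈ V, v ∈ S) ∧ L.prod - V.prod ∈ J := by
  intro L
  induction L with
  | nil => exact fun _ => ⟨[], rfl, by simp, by simpa using J.zero_mem⟩
  | cons a L ih =>
      intro h
      obtain ⟨u, hu, v, hv, rfl⟩ := h a (by simp)
      obtain ⟨V, hlen, hVS, hJ⟩ := ih fun x hx => h x (by simp [hx])
      refine ⟨v :: V, by simp [hlen], ?_, ?_⟩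
      · rintro w hw
        rcases List.mem_cons.mp hw with rfl | hw
        · exact hv
        · exact hVS w hw
      have : (u + v) * L.prod - (v :: V).prod = u * L.prod + v * (L.prod - V.prod) := by
        simp only [List.prod_cons]; noncomm_ring
      rw [List.prod_cons, this]
      exact J.add_mem (J.mul_mem_right u L.prod hu) (J.mul_mem_left v _ hJ)

end aux

section main
variable {A : Type*} [Ring A] (J : TwoSidedIdeal A) (N : ℕ) (I : Fin N → TwoSidedIdeal A)

/-- The tail sum `T k = Σ_{m ≥ k} I m`. -/
private def Tail (k : ℕ) : TwoSidedIdeal A := ⨆ m ∈ {m : Fin N | k ≤ m.val}, I m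

lemma Tail_antitone {k₁ k₂ : ℕ} (h : k₁ ≤ k₂) : Tail N I k₂ ≤ Tail N I k₁ := by
  refine iSup_le fun m => iSup_le fun hm => ?_
  exact le_iSup_of_le m (le_iSup_of_le (le_trans h hm) le_rfl)

lemma Tail_top_eq_zero {x : A} (hx : x ∈ Tail N I N) : x = 0 := by
  have : Tail N I N ≤ ⊥ := by
    refine iSup_le fun m => iSup_le fun hm => absurd m.isLt (by simp only [Set.mem_setOf_eq] at hm; omega)
  exact (mem_bot A).mp (this hx)

lemma Tail_decomp {k : ℕ} (hk : k < N) :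
    Tail N I k ≤ I ⟨k, hk⟩ ⊔ Tail N I (k + 1) := by
  refine iSup_le fun m => iSup_le fun hm => ?_
  simp only [Set.mem_setOf_eq] at hm
  rcases eq_or_lt_of_le hm with he | hlt
  · have : m = ⟨k, hk⟩ := Fin.ext he.symm
    rw [this]; exact le_sup_left
  · exact le_trans (le_iSup₂_of_le m hlt le_rfl) le_sup_right

lemma pair_mem
    (h2 : ∀ k : Fin N, ∀ a ∈ I k, ∀ b ∈ I k,
        a * b ∈ (I k).prod J ⊔ ⨆ m ∈ {m : Fin N | k < m}, I m)
    (k : ℕ) {x y : A} (hx : x ∈ Tail N I k) (hy : y ∈ Tail N I k) :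
    x * y ∈ J ⊔ Tail N I (k + 1) := by
  by_cases hk : k < N
  · set κ : Fin N := ⟨k, hk⟩
    obtain ⟨a, ha, b, hb, rfl⟩ := mem_sup.mp (Tail_decomp N I hk hx)
    obtain ⟨c, hc, d, hd, rfl⟩ := mem_sup.mp (Tail_decomp N I hk hy)
    have hTeq : (⨆ m ∈ {m : Fin N | κ < m}, I m) = Tail N I (k + 1) := by
      unfold Tail
      congr 1
    have hac : a * c ∈ J ⊔ Tail N I (k + 1) := by
      have := h2 κ a ha c hc
      rw [hTeq] at this
      exact sup_le_sup_right (prod_le_right (I κ) J) _ this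
    have h2' : a * d + b * (c + d) ∈ Tail N I (k + 1) :=
      (Tail N I (k+1)).add_mem ((Tail N I (k+1)).mul_mem_left a d hd)
        ((Tail N I (k+1)).mul_mem_right b (c + d) hb)
    have hEq : (a + b) * (c + d) = a * c + (a * d + b * (c + d)) := by noncomm_ring
    rw [hEq]
    exact (J ⊔ Tail N I (k+1)).add_mem hac (mem_sup_right h2')
  · have : x = 0 := Tail_top_eq_zero N I (Tail_antitone N I (by omega) hx)
    rw [this, zero_mul]
    exact (J ⊔ Tail N I (k+1)).zero_mem

lemma main_induction
    (h2 : ∀ k : Fin N, ∀ a ∈ I k, ∀ b ∈ I k,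
        a * b ∈ (I k).prod J ⊔ ⨆ m ∈ {m : Fin N | k < m}, I m) :
    ∀ d : ℕ, ∀ L : List A, L.length = 2 ^ d → (∀ a ∈ L, a ∈ Tail N I (N - d)) →
      L.prod ∈ J := by
  intro d
  induction d with
  | zero =>
      intro L hL hmem
      obtain ⟨a, rfl⟩ := List.length_eq_one_iff.mp hL
      have ha : a = 0 := Tail_top_eq_zero N I (by simpa using hmem a (by simp))
      simp [ha]
  | succ d ih =>
      intro L hL hmem
      obtain ⟨P, hPlen, hPprod, hPmem⟩ := exists_pair_list (2 ^ d) L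
        (by rw [hL]; ring)
      have hPJ : ∀ p ∈ P, ∃ u ∈ J, ∃ v ∈ Tail N I (N - d), p = u + v := by
        intro p hp
        obtain ⟨x, hx, y, hy, rfl⟩ := hPmem p hp
        have := pair_mem J N I h2 (N - (d+1)) (hmem x hx) (hmem y hy)
        have hle : J ⊔ Tail N I (N - (d+1) + 1) ≤ J ⊔ Tail N I (N - d) :=
          sup_le_sup_left (Tail_antitone N I (by omega)) J
        obtain ⟨u, hu, v, hv, heq⟩ := mem_sup.mp (hle this)
        exact ⟨u, hu, v, hv, heq.symm⟩
      obtain ⟨V, hVlen, hVS, hVJ⟩ := split_list J (Tail N I (N - d)) P hPJ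
      have hVprod : V.prod ∈ J := ih V (by rw [hVlen, hPlen]) hVS
      have : P.prod ∈ J := by
        have := J.add_mem hVJ hVprod
        simpa using this
      rwa [hPprod] at this

end main

theorem prod_pow_two_mem_of_ideal_filtration
    {A : Type*} [Ring A] (J : TwoSidedIdeal A) (N : ℕ)
    (I : Fin N → TwoSidedIdeal A)
    (h1 : ∀ k l : Fin N, k ≠ l → ∀ a ∈ I k, ∀ b ∈ I l,
        a * b ∈ ⨆ m ∈ {m : Fin N | max k l ≤ m}, I m)
    (h2 : ∀ k : Fin N, ∀ a ∈ I k, ∀ b ∈ I k,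
        a * b ∈ (I k).prod J ⊔ ⨆ m ∈ {m : Fin N | k < m}, I m) :
    (∀ f : Fin (2 ^ N) → A, (∀ j, f j ∈ ⨆ k, I k) → (List.ofFn f).prod ∈ J) ∧
    ∃ M : ℕ, 0 < M ∧
      ∀ L : List A, L.length = M → (∀ a ∈ L, a ∈ ⨆ k, I k) → L.prod ∈ J := by
  have key : ∀ L : List A, L.length = 2 ^ N → (∀ a ∈ L, a ∈ ⨆ k, I k) → L.prod ∈ J := by
    intro L hL hmem
    refine main_induction J N I h2 N L hL fun a ha => ?_
    have h0 : (⨆ k, I k) ≤ Tail N I (N - N) := by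
      refine iSup_le fun m => le_iSup₂_of_le m (by simp) le_rfl
    exact h0 (hmem a ha)
  refine ⟨fun f hf => ?_, 2 ^ N, Nat.pow_pos (by norm_num), key⟩
  refine key (List.ofFn f) (by simp) fun a ha => ?_
  obtain ⟨j, rfl⟩ := List.mem_ofFn.mp ha
  exact hf j
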